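/- Let ε > 0, A > 0, C_h ≥ 0, and ψ₀' : (-1,1) → ℝ continuous, strictly increasing, with lim_{r→1} ψ₀'(r) = +∞. Let y_n : [τ₁, ∞) → (-1,1) solve ε y_n' + A ψ₀'(y_n) = C_h with y_n(τ₁) = 1 - 1/(2n). Then for every τ₂ > τ₁ there exists δ̃ ∈ (0,1), independent of n, such that y_n(t) ≤ 1 - δ̃ for all t ≥ τ₂ and all n ≥ 1. -/

import Mathlib

open Set Filter

private lemma anti_aux (f f' : ℝ → ℝ) (u v : ℝ)
    (hd : ∀ x ∈ Icc u v, HasDerivAt f (f' x) x)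
    (hneg : ∀ x ∈ Ioo u v, f' x ≤ 0) : AntitoneOn f (Icc u v) := by
  apply antitoneOn_of_deriv_nonpos (convex_Icc u v)
  · exact fun x hx => (hd x hx).continuousAt.continuousWithinAt
  · intro x hx
    rw [interior_Icc] at hx
    exact ((hd x (Ioo_subset_Icc_self hx)).differentiableAt).differentiableWithinAt
  · intro x hx
    rw [interior_Icc] at hx
    rw [(hd x (Ioo_subset_Icc_self hx)).deriv]
    exact hneg x hx

/-- Uniform-in-n instantaneous separation: solutions yₙ of ε y' + A ψ₀'(y) = C_h
with yₙ(τ₁) = 1 - 1/(2n) satisfy yₙ(t) ≤ 1 - δ̃ for all t ≥ τ₂ > τ₁, with δ̃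
independent of n. -/
theorem stmt10 (ε A C_h τ₁ : ℝ) (hε : 0 < ε) (hA : 0 < A) (hC : 0 ≤ C_h)
    (ψ' : ℝ → ℝ)
    (hcont : ContinuousOn ψ' (Set.Ioo (-1 : ℝ) 1))
    (hmono : StrictMonoOn ψ' (Set.Ioo (-1 : ℝ) 1))
    (htop : Filter.Tendsto ψ' (nhdsWithin 1 (Set.Iio 1)) Filter.atTop)
    (y : ℕ → ℝ → ℝ)
    (hy : ∀ n : ℕ, 1 ≤ n → ∀ t ≥ τ₁, y n t ∈ Set.Ioo (-1 : ℝ) 1)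
    (hode : ∀ n : ℕ, 1 ≤ n → ∀ t ≥ τ₁, HasDerivAt (y n) ((C_h - A * ψ' (y n t)) / ε) t)
    (hinit : ∀ n : ℕ, 1 ≤ n → y n τ₁ = 1 - 1 / (2 * (n : ℝ))) :
    ∀ τ₂ > τ₁, ∃ δ ∈ Set.Ioo (0 : ℝ) 1, ∀ n : ℕ, 1 ≤ n → ∀ t ≥ τ₂, y n t ≤ 1 - δ := by
  intro τ₂ hτ₂
  set b : ℝ := (C_h + ε) / A with hb
  obtain ⟨a, ha1, hab⟩ : ∃ a ∈ Iio (1:ℝ), Ioo a 1 ⊆ {x | b ≤ ψ' x} := by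
    have h := htop.eventually_ge_atTop b
    rwa [eventually_iff, mem_nhdsLT_iff_exists_Ioo_subset] at h
  set a' : ℝ := max a 0 with ha'
  have ha'0 : (0:ℝ) ≤ a' := le_max_right _ _
  have ha'1 : a' < 1 := max_lt ha1 one_pos
  set δ : ℝ := min ((1 - a') / 2) ((τ₂ - τ₁) / 2) with hδ
  have hδpos : 0 < δ := lt_min (by linarith) (by linarith)
  have hδlt1 : δ < 1 := by
    have : δ ≤ (1 - a') / 2 := min_le_left _ _
    linarith
  have hδτ : δ < τ₂ - τ₁ := by
    have : δ ≤ (τ₂ - τ₁) / 2 := min_le_right _ _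
    linarith
  have hδa : a' < 1 - δ := by
    have : δ ≤ (1 - a') / 2 := min_le_left _ _
    linarith
  -- derivative bound when y is above 1 - δ
  have hderivle : ∀ n : ℕ, 1 ≤ n → ∀ r, τ₁ ≤ r → 1 - δ < y n r →
      (C_h - A * ψ' (y n r)) / ε ≤ -1 := by
    intro n hn r hr hyr
    have hmem := hy n hn r hr
    have hIoo : y n r ∈ Ioo a 1 :=
      ⟨lt_of_le_of_lt (le_max_left a 0) (lt_of_lt_of_le hδa hyr.le), hmem.2⟩
    have hψ : b ≤ ψ' (y n r) := hab hIoo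
    have hAb : A * b = C_h + ε := by
      rw [hb]; field_simp
    have hnum : C_h - A * ψ' (y n r) ≤ -ε := by
      nlinarith [mul_le_mul_of_nonneg_left hψ hA.le]
    calc (C_h - A * ψ' (y n r)) / ε ≤ (-ε) / ε := by gcongr
      _ = -1 := by field_simp
  -- invariance: once below 1 - δ, stays below
  have hinv : ∀ n : ℕ, 1 ≤ n → ∀ s, τ₁ ≤ s → y n s ≤ 1 - δ → ∀ t, s ≤ t → y n t ≤ 1 - δ := by
    intro n hn s hs hys t hts
    by_contra hcon
    push_neg at hcon
    set S : Set ℝ := Icc s t ∩ (y n) ⁻¹' (Iic (1 - δ)) with hS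
    have hsub : ∀ r ∈ Icc s t, τ₁ ≤ r := fun r hr => le_trans hs hr.1
    have hycont : ContinuousOn (y n) (Icc s t) := fun r hr =>
      ((hode n hn r (hsub r hr)).continuousAt).continuousWithinAt
    have hSclosed : IsClosed S :=
      hycont.preimage_isClosed_of_isClosed isClosed_Icc isClosed_Iic
    have hSne : S.Nonempty := ⟨s, ⟨le_rfl, hts⟩, hys⟩
    have hSbdd : BddAbove S := ⟨t, fun r hr => hr.1.2⟩
    set u : ℝ := sSup S with hu
    have huS : u ∈ S := hSclosed.csSup_mem hSne hSbdd
    have hust : u ∈ Icc s t := huS.1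
    have hyu : y n u ≤ 1 - δ := huS.2
    have hut : u < t := lt_of_le_of_ne hust.2 (by
      intro h; rw [h] at hyu; exact absurd hyu (not_le.mpr hcon))
    have habove : ∀ r ∈ Ioo u t, 1 - δ < y n r := by
      intro r hr
      by_contra hle
      push_neg at hle
      have hrS : r ∈ S := ⟨⟨le_trans hust.1 hr.1.le, hr.2.le⟩, hle⟩
      exact absurd (le_csSup hSbdd hrS) (not_le.mpr hr.1)
    have hanti : AntitoneOn (y n) (Icc u t) := by
      apply anti_aux (y n) (fun r => (C_h - A * ψ' (y n r)) / ε)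
      · intro r hr
        exact hode n hn r (le_trans (hsub u hust) hr.1)
      · intro r hr
        have := hderivle n hn r (le_trans (hsub u hust) hr.1.le) (habove r hr)
        linarith
    have : y n t ≤ y n u := hanti ⟨le_rfl, hut.le⟩ ⟨hut.le, le_rfl⟩ hut.le
    linarith
  -- descent: within [τ₁, τ₂] the solution drops below 1 - δ
  have hdesc : ∀ n : ℕ, 1 ≤ n → ∃ s ∈ Icc τ₁ τ₂, y n s ≤ 1 - δ := by
    intro n hn
    by_contra hcon
    push_neg at hcon
    have habove : ∀ r ∈ Icc τ₁ τ₂, 1 - δ < y n r := fun r hr => hcon r hr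
    have hanti : AntitoneOn (fun r => y n r + r) (Icc τ₁ τ₂) := by
      apply anti_aux _ (fun r => (C_h - A * ψ' (y n r)) / ε + 1)
      · intro r hr
        exact (hode n hn r hr.1).add (hasDerivAt_id r)
      · intro r hr
        have := hderivle n hn r hr.1.le (habove r (Ioo_subset_Icc_self hr))
        linarith
    have h1 : y n τ₂ + τ₂ ≤ y n τ₁ + τ₁ :=
      hanti ⟨le_rfl, hτ₂.le⟩ ⟨hτ₂.le, le_rfl⟩ hτ₂.le
    have h2 : y n τ₁ = 1 - 1 / (2 * (n : ℝ)) := hinit n hn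
    have h3 : (0:ℝ) < 1 / (2 * (n : ℝ)) := by
      have : (0:ℝ) < (n:ℝ) := by exact_mod_cast hn
      positivity
    have h4 : 1 - δ < y n τ₂ := habove τ₂ ⟨hτ₂.le, le_rfl⟩
    linarith
  refine ⟨δ, ⟨hδpos, hδlt1⟩, ?_⟩
  intro n hn t ht
  obtain ⟨s, hs, hys⟩ := hdesc n hn
  exact hinv n hn s hs.1 hys t (le_trans hs.2 ht)
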